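/- Let X be a compact metric space, f : X → X continuous, and α ∈ (ℕ \ {1})^ℕ. Suppose (P_k)_{k=1}^∞ is a sequence of finite clopen partitions of X with max{diam(P) : P ∈ P_k} → 0 such that for each k: |P_k| = Π_{i=1}^k α(i); P_{k+1} refines P_k; and the members of P_k are cyclically permuted by f (there is an enumeration P₀,…,P_{n-1} of P_k with f mapping P_i onto P_{(i+1) mod n}). Then (X,f) is topologically conjugate to the adding machine (Δ_α, φ_α). -/

import Mathlib

open Set

/-- Successor mod m on Fin m. -/
def finSucc {m : ℕ} (x : Fin m) : Fin m := ⟨(x.val + 1) % m, Nat.mod_lt _ x.pos⟩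

/-- Auxiliary recursion defining the add-one-with-carry map on Δ_α = Π i, Fin (α i). -/
def phiAux (α : ℕ → ℕ) (x : ∀ i, Fin (α i)) : (i : ℕ) → Fin (α i)
  | 0 => finSucc (x 0)
  | i + 1 => if (x i).val ≤ (phiAux α x i).val then x (i + 1) else finSucc (x (i + 1))

/-- The adding machine (odometer) map φ_α on Δ_α = Π i, Fin (α i). -/
def phi (α : ℕ → ℕ) (x : ∀ i, Fin (α i)) : ∀ i, Fin (α i) := fun i => phiAux α x i


/-- Product of the first `k` values of `α`. -/
def Nprod (α : ℕ → ℕ) (k : ℕ) : ℕ := ∏ i ∈ Finset.range k, α i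

lemma Nprod_succ (α : ℕ → ℕ) (k : ℕ) : Nprod α (k + 1) = Nprod α k * α k :=
  Finset.prod_range_succ α k

lemma Nprod_pos {α : ℕ → ℕ} (hα : ∀ i, 2 ≤ α i) (k : ℕ) : 0 < Nprod α k :=
  Finset.prod_pos fun i _ => lt_of_lt_of_le two_pos (hα i)

/-- The value of the first `k` digits. -/
def valk (α : ℕ → ℕ) (y : ∀ i, Fin (α i)) (k : ℕ) : ℕ :=
  ∑ i ∈ Finset.range k, (y i).val * Nprod α i

lemma valk_succ (α : ℕ → ℕ) (y : ∀ i, Fin (α i)) (k : ℕ) :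
    valk α y (k + 1) = valk α y k + (y k).val * Nprod α k :=
  Finset.sum_range_succ _ k

lemma valk_lt {α : ℕ → ℕ} (hα : ∀ i, 2 ≤ α i) (y : ∀ i, Fin (α i)) (k : ℕ) :
    valk α y k < Nprod α k := by
  induction k with
  | zero => simp [valk, Nprod]
  | succ k ih =>
    rw [valk_succ, Nprod_succ]
    have h1 : (y k).val ≤ α k - 1 := Nat.le_sub_one_of_lt (y k).isLt
    have h2 : (y k).val * Nprod α k ≤ (α k - 1) * Nprod α k :=
      Nat.mul_le_mul_right _ h1
    have h3 : 0 < Nprod α k := Nprod_pos hα k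
    have h4 : (α k - 1) * Nprod α k + Nprod α k = Nprod α k * α k := by
      have : 1 ≤ α k := le_trans one_le_two (hα k)
      rw [Nat.sub_one_mul]
      have h5 : Nprod α k ≤ α k * Nprod α k :=
        Nat.le_mul_of_pos_left _ (lt_of_lt_of_le two_pos (hα k))
      rw [Nat.sub_add_cancel h5, Nat.mul_comm]
    omega

lemma digit_eq {α : ℕ → ℕ} (hα : ∀ i, 2 ≤ α i) (y : ∀ i, Fin (α i)) (k : ℕ) :
    (y k).val = valk α y (k + 1) / Nprod α k := by
  rw [valk_succ, Nat.add_mul_div_right _ _ (Nprod_pos hα k),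
    Nat.div_eq_of_lt (valk_lt hα y k)]
  omega

lemma valk_mod {α : ℕ → ℕ} (hα : ∀ i, 2 ≤ α i) (y : ∀ i, Fin (α i)) (k : ℕ) :
    valk α y (k + 1) % Nprod α k = valk α y k := by
  rw [valk_succ, Nat.add_mul_mod_self_right, Nat.mod_eq_of_lt (valk_lt hα y k)]

lemma eq_of_valk_eq {α : ℕ → ℕ} (hα : ∀ i, 2 ≤ α i) (y z : ∀ i, Fin (α i))
    (h : ∀ k, valk α y (k + 1) = valk α z (k + 1)) : y = z := by
  funext k
  have := digit_eq hα y k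
  have := digit_eq hα z k
  exact Fin.ext (by rw [digit_eq hα y k, digit_eq hα z k, h k])

lemma finSucc_lt_iff {m : ℕ} (hm2 : 2 ≤ m) (x : Fin m) : ((finSucc x).val < x.val) ↔ x.val + 1 = m := by
  have hx := x.isLt
  have hm := x.pos
  constructor
  · intro h
    by_contra hne
    have hlt : x.val + 1 < m := by omega
    rw [finSucc] at h
    simp only at h
    rw [Nat.mod_eq_of_lt hlt] at h
    omega
  · intro h
    rw [finSucc]
    simp only
    rw [h, Nat.mod_self]
    omega

lemma valk_phi {α : ℕ → ℕ} (hα : ∀ i, 2 ≤ α i) (y : ∀ i, Fin (α i)) : ∀ k,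
    valk α (phi α y) (k + 1) = (valk α y (k + 1) + 1) % Nprod α (k + 1) ∧
    ((phiAux α y k).val < (y k).val ↔ valk α y (k + 1) + 1 = Nprod α (k + 1)) := by
  intro k
  induction k with
  | zero =>
    have hN0 : Nprod α 0 = 1 := rfl
    have h1 : valk α (phi α y) 1 = (phiAux α y 0).val := by
      simp [valk_succ, valk, hN0, phi]
    have h2 : valk α y 1 = (y 0).val := by simp [valk_succ, valk, hN0]
    have hN1 : Nprod α 1 = α 0 := by rw [Nprod_succ, hN0, one_mul]
    constructor
    · rw [h1, h2, hN1]
      show (finSucc (y 0)).val = _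
      rfl
    · rw [h2, hN1]
      show ((finSucc (y 0)).val < (y 0).val) ↔ _
      exact finSucc_lt_iff (hα 0) (y 0)
  | succ k ih =>
    obtain ⟨ihv, ihc⟩ := ih
    have hNpos : 0 < Nprod α (k+1) := Nprod_pos hα (k+1)
    have hvlt : valk α y (k+1) < Nprod α (k+1) := valk_lt hα y (k+1)
    have hylt : (y (k+1)).val < α (k+1) := (y (k+1)).isLt
    have hNs : Nprod α (k+2) = Nprod α (k+1) * α (k+1) := Nprod_succ α (k+1)
    by_cases hc : (y k).val ≤ (phiAux α y k).val
    · -- no carry into k+1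
      have hfull : valk α y (k+1) + 1 ≠ Nprod α (k+1) := by
        intro h; exact absurd (ihc.mpr h) (not_lt.mpr hc)
      have hmod : valk α (phi α y) (k+1) = valk α y (k+1) + 1 := by
        rw [ihv, Nat.mod_eq_of_lt (by omega)]
      have hphieq : phiAux α y (k+1) = y (k+1) := by
        rw [phiAux, if_pos hc]
      have hphiv : (phi α y (k+1)).val = (y (k+1)).val := by
        show (phiAux α y (k+1)).val = _
        rw [hphieq]
      have hlt2 : valk α y (k+2) + 1 < Nprod α (k+2) := by
        rw [valk_succ, hNs]
        have h2 : (y (k+1)).val * Nprod α (k+1) ≤ (α (k+1) - 1) * Nprod α (k+1) :=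
          Nat.mul_le_mul_right _ (by omega)
        have h4 : (α (k+1) - 1) * Nprod α (k+1) + Nprod α (k+1) = Nprod α (k+1) * α (k+1) := by
          rw [Nat.sub_one_mul, Nat.sub_add_cancel (Nat.le_mul_of_pos_left _ (by omega)),
            Nat.mul_comm]
        have hNs2 : Nprod α (k+1+1) = Nprod α (k+1) * α (k+1) := Nprod_succ α (k+1)
        have hb2 : valk α y (k+1+1) = valk α y (k+2) := rfl
        omega
      constructor
      · rw [Nat.mod_eq_of_lt hlt2, valk_succ α (phi α y) (k+1), hmod]
        have : (phi α y (k+1)).val = (y (k+1)).val := hphiv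
        rw [this, valk_succ α y (k+1)]
        omega
      · rw [hphieq]
        simp only [lt_irrefl, false_iff]
        have hb : valk α y (k+2) = valk α y (k+1) + (y (k+1)).val * Nprod α (k+1) :=
          valk_succ α y (k+1)
        have h2 : (y (k+1)).val * Nprod α (k+1) ≤ (α (k+1) - 1) * Nprod α (k+1) :=
          Nat.mul_le_mul_right _ (by omega)
        have h4 : (α (k+1) - 1) * Nprod α (k+1) + Nprod α (k+1) = Nprod α (k+1) * α (k+1) := by
          rw [Nat.sub_one_mul, Nat.sub_add_cancel (Nat.le_mul_of_pos_left _ (by omega)),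
            Nat.mul_comm]
        have hNs2 : Nprod α (k+1+1) = Nprod α (k+1) * α (k+1) := Nprod_succ α (k+1)
        have hb2 : valk α y (k+1+1) = valk α y (k+2) := rfl
        omega
    · -- carry into k+1
      push_neg at hc
      have hfull : valk α y (k+1) + 1 = Nprod α (k+1) := ihc.mp hc
      have hmod0 : valk α (phi α y) (k+1) = 0 := by
        rw [ihv, hfull, Nat.mod_self]
      have hphieq : phiAux α y (k+1) = finSucc (y (k+1)) := by
        rw [phiAux, if_neg (not_le.mpr hc)]
      have hval2 : valk α y (k+2) + 1 = ((y (k+1)).val + 1) * Nprod α (k+1) := by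
        rw [valk_succ]
        have : valk α y (k+1) + 1 + (y (k+1)).val * Nprod α (k+1)
            = ((y (k+1)).val + 1) * Nprod α (k+1) := by rw [hfull]; ring
        omega
      constructor
      · rw [valk_succ, hmod0, zero_add, hval2, hNs, Nat.mul_comm (Nprod α (k+1)) (α (k+1)),
          Nat.mul_mod_mul_right]
        show (phi α y (k+1)).val * _ = _
        have : (phi α y (k+1)).val = ((y (k+1)).val + 1) % α (k+1) := by
          show (phiAux α y (k+1)).val = _
          rw [hphieq]; rfl
        rw [this]
      · rw [hphieq, finSucc_lt_iff (hα (k+1)), hval2, hNs]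
        constructor
        · intro h; rw [h, Nat.mul_comm]
        · intro h
          exact Nat.eq_of_mul_eq_mul_right hNpos (by rw [h, Nat.mul_comm])

/-- Block–Keesling characterization: if f : X → X is continuous on a compact metric
space and there is a sequence of finite clopen partitions P_k of X, with diameters
tending to 0, of cardinality Π_{i≤k} α(i), each refined by the next, whose members are
cyclically permuted by f, then (X,f) is topologically conjugate to (Δ_α, φ_α). -/
theorem stmt10 {X : Type*} [MetricSpace X] [CompactSpace X]
    (f : X → X) (hf : Continuous f)
    (α : ℕ → ℕ) (hα : ∀ i, 2 ≤ α i)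
    (P : ℕ → Finset (Set X))
    -- each P k is a clopen partition of X into nonempty sets:
    (hclopen : ∀ k, ∀ A ∈ P k, IsClopen A ∧ A.Nonempty)
    (hcover : ∀ k, ⋃ A ∈ (P k : Set (Set X)), A = univ)
    (hpdisj : ∀ k, ∀ A ∈ P k, ∀ B ∈ P k, A ≠ B → Disjoint A B)
    -- diameters tend to 0:
    (hdiam : ∀ ε > (0 : ℝ), ∃ K : ℕ, ∀ k ≥ K, ∀ A ∈ P k, Metric.diam A < ε)
    -- |P k| = Π_{i=1}^k α(i):
    (hcard : ∀ k, (P k).card = ∏ i ∈ Finset.range (k + 1), α i)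
    -- P (k+1) refines P k:
    (href : ∀ k, ∀ B ∈ P (k + 1), ∃ A ∈ P k, B ⊆ A)
    -- the members of P k are cyclically permuted by f:
    (hcyc : ∀ k, ∃ e : ℕ → Set X,
      (∀ i < (P k).card, e i ∈ P k) ∧
      (∀ A ∈ P k, ∃ i < (P k).card, e i = A) ∧
      (∀ i < (P k).card, ∀ j < (P k).card, i ≠ j → e i ≠ e j) ∧
      (∀ i < (P k).card, f '' e i = e ((i + 1) % (P k).card))) :
    ∃ h : X ≃ₜ (∀ i, Fin (α i)), ∀ x : X, h (f x) = phi α (h x) := by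
  classical
  have hαpos : ∀ i, 0 < α i := fun i => lt_of_lt_of_le two_pos (hα i)
  set n : ℕ → ℕ := fun k => (P k).card with hn
  have hnN : ∀ k, n k = Nprod α (k + 1) := fun k => hcard k
  have hnpos : ∀ k, 0 < n k := fun k => by rw [hnN]; exact Nprod_pos hα (k + 1)
  choose e he1 he2 he3 he4 using hcyc
  have he1' : ∀ k, ∀ i < n k, e k i ∈ P k := he1
  have he2' : ∀ k, ∀ A ∈ P k, ∃ i < n k, e k i = A := he2
  have he3' : ∀ k, ∀ i < n k, ∀ j < n k, i ≠ j → e k i ≠ e k j := he3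
  have he4' : ∀ k, ∀ i < n k, f '' e k i = e k ((i + 1) % n k) := he4
  -- base point
  have hP0 : (P 0).Nonempty := Finset.card_pos.mp (by rw [hcard 0]; exact Nprod_pos hα 1)
  obtain ⟨A0, hA0⟩ := hP0
  obtain ⟨x₀, hx₀⟩ := (hclopen 0 A0 hA0).2
  have hsx : ∀ k, ∃ s, s < n k ∧ x₀ ∈ e k s := by
    intro k
    have hx : x₀ ∈ ⋃ A ∈ (P k : Set (Set X)), A := by rw [hcover k]; trivial
    simp only [mem_iUnion, exists_prop] at hx
    obtain ⟨A, hA, hxA⟩ := hx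
    obtain ⟨i, hi, hie⟩ := he2' k A (by exact_mod_cast hA)
    exact ⟨i, hi, hie ▸ hxA⟩
  choose s hslt hsmem using hsx
  set E : ℕ → ℕ → Set X := fun k i => e k ((i + s k) % n k) with hE
  have hElt : ∀ k i, (i + s k) % n k < n k := fun k i => Nat.mod_lt _ (hnpos k)
  have hEP : ∀ k i, E k i ∈ P k := fun k i => he1' k _ (hElt k i)
  have hEper : ∀ k i, E k (i % n k) = E k i := by
    intro k i; simp only [hE]; rw [Nat.mod_add_mod]
  have hEf : ∀ k i, f '' E k i = E k (i + 1) := by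
    intro k i
    simp only [hE]
    rw [he4' k _ (hElt k i), Nat.mod_add_mod, Nat.add_right_comm i (s k) 1]
  have hEx0 : ∀ k, x₀ ∈ E k 0 := by
    intro k; simp only [hE]
    rw [zero_add, Nat.mod_eq_of_lt (hslt k)]; exact hsmem k
  have hEinj : ∀ k, ∀ i < n k, ∀ j < n k, E k i = E k j → i = j := by
    intro k i hi j hj hEq
    by_cases hm : (i + s k) % n k = (j + s k) % n k
    · have h2 : i ≡ j [MOD n k] := Nat.ModEq.add_right_cancel' (s k) hm
      have := h2
      rw [Nat.ModEq] at this
      rwa [Nat.mod_eq_of_lt hi, Nat.mod_eq_of_lt hj] at this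
    · exact absurd hEq (he3' k _ (hElt k i) _ (hElt k j) hm)
  have hEuniq : ∀ k (x : X), ∀ i, i < n k → ∀ j, j < n k → x ∈ E k i → x ∈ E k j → i = j := by
    intro k x i hi j hj hxi hxj
    by_contra hne
    have hne' : E k i ≠ E k j := fun h => hne (hEinj k i hi j hj h)
    exact Set.disjoint_left.mp (hpdisj k _ (hEP k i) _ (hEP k j) hne') hxi hxj
  have hEex : ∀ (x : X) k, ∃ i, i < n k ∧ x ∈ E k i := by
    intro x k
    have hx : x ∈ ⋃ A ∈ (P k : Set (Set X)), A := by rw [hcover k]; trivial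
    simp only [mem_iUnion, exists_prop] at hx
    obtain ⟨A, hA, hxA⟩ := hx
    obtain ⟨j, hj, hje⟩ := he2' k A (by exact_mod_cast hA)
    refine ⟨(j + n k - s k % n k) % n k, Nat.mod_lt _ (hnpos k), ?_⟩
    simp only [hE]
    have hd := Nat.div_add_mod (s k) (n k)
    have hr : s k % n k < n k := Nat.mod_lt _ (hnpos k)
    have key : ((j + n k - s k % n k) % n k + s k) % n k = j := by
      rw [Nat.mod_add_mod]
      have h1 : j + n k - s k % n k + s k = j + n k * (s k / n k + 1) := by
        have h2 : n k * (s k / n k + 1) = n k * (s k / n k) + n k := by ring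
        omega
      rw [h1, Nat.add_mul_mod_self_left, Nat.mod_eq_of_lt hj]
    rw [key, hje]
    exact hxA
  choose m hmlt hmm using hEex
  have hnest : ∀ k i, E (k + 1) i ⊆ E k i := by
    intro k i
    induction i with
    | zero =>
      obtain ⟨A, hA, hsub⟩ := href k (E (k + 1) 0) (hEP (k + 1) 0)
      have hx0A : x₀ ∈ A := hsub (hEx0 (k + 1))
      have hAE : A = E k 0 := by
        by_contra hne
        exact Set.disjoint_left.mp (hpdisj k A hA _ (hEP k 0) hne) hx0A (hEx0 k)
      exact hAE ▸ hsub
    | succ i ih =>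
      rw [← hEf, ← hEf]
      exact Set.image_mono (f := f) ih
  have hcompat : ∀ x k, m x (k + 1) % n k = m x k := by
    intro x k
    have h1 : x ∈ E k (m x (k + 1) % n k) := by
      rw [hEper]; exact hnest k _ (hmm x (k + 1))
    exact hEuniq k x _ (Nat.mod_lt _ (hnpos k)) _ (hmlt x k) h1 (hmm x k)
  have hmf : ∀ x k, m (f x) k = (m x k + 1) % n k := by
    intro x k
    have h1 : f x ∈ E k ((m x k + 1) % n k) := by
      rw [hEper, ← hEf]; exact mem_image_of_mem f (hmm x k)
    exact hEuniq k (f x) _ (hmlt (f x) k) _ (Nat.mod_lt _ (hnpos k)) (hmm (f x) k) h1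
  -- the map to digits
  set h₀ : X → ∀ i, Fin (α i) :=
    fun x i => ⟨m x i / Nprod α i % α i, Nat.mod_lt _ (hαpos i)⟩ with hh₀
  have hdig : ∀ x i, (h₀ x i).val = m x i / Nprod α i := by
    intro x i
    have h1 : m x i < α i * Nprod α i := by
      have h2 := hmlt x i
      rw [hnN i, Nprod_succ, Nat.mul_comm] at h2
      exact h2
    have h3 : m x i / Nprod α i < α i := (Nat.div_lt_iff_lt_mul (Nprod_pos hα i)).mpr h1
    exact Nat.mod_eq_of_lt h3
  have hval : ∀ x k, valk α (h₀ x) (k + 1) = m x k := by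
    intro x k
    induction k with
    | zero =>
      rw [valk_succ]
      have h0 : valk α (h₀ x) 0 = 0 := rfl
      have h1 : Nprod α 0 = 1 := rfl
      rw [h0, h1, hdig x 0, h1]
      simp
    | succ k ih =>
      rw [valk_succ, ih, hdig x (k + 1)]
      have h1 : m x k = m x (k + 1) % Nprod α (k + 1) := by
        rw [← hnN k]; exact (hcompat x k).symm
      rw [h1, Nat.mod_add_div']
  have hconj : ∀ x, h₀ (f x) = phi α (h₀ x) := by
    intro x
    apply eq_of_valk_eq hα
    intro k
    rw [hval (f x) k, hmf x k, (valk_phi hα (h₀ x) k).1, hval x k, hnN k]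
  -- injective
  have hinj : Function.Injective h₀ := by
    intro x y hxy
    have hmeq : ∀ k, m x k = m y k := by
      intro k
      rw [← hval x k, ← hval y k, hxy]
    by_contra hne
    have hlt : ∀ ε > (0 : ℝ), dist x y < ε := by
      intro ε hε
      obtain ⟨K, hK⟩ := hdiam ε hε
      have h1 : x ∈ E K (m x K) := hmm x K
      have h2 : y ∈ E K (m x K) := by rw [hmeq K]; exact hmm y K
      have hb : Bornology.IsBounded (E K (m x K)) :=
        (((hclopen K _ (hEP K (m x K))).1.isClosed.isCompact).isBounded)
      calc dist x y ≤ Metric.diam (E K (m x K)) := Metric.dist_le_diam_of_mem hb h1 h2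
        _ < ε := hK K le_rfl _ (hEP K (m x K))
    exact absurd (hlt _ (dist_pos.mpr hne)) (lt_irrefl _)
  -- surjective
  have hsurj : Function.Surjective h₀ := by
    intro y
    set M : ℕ → ℕ := fun k => valk α y (k + 1) with hM
    have hMlt : ∀ k, M k < n k := fun k => by
      rw [hnN]; exact valk_lt hα y (k + 1)
    have hMc : ∀ k, M (k + 1) % n k = M k := fun k => by
      rw [hnN]; exact valk_mod hα y (k + 1)
    set C : ℕ → Set X := fun k => E k (M k) with hC
    have hCne : ∀ k, (C k).Nonempty := fun k => (hclopen k _ (hEP k (M k))).2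
    have hCcl : ∀ k, IsClosed (C k) := fun k => (hclopen k _ (hEP k (M k))).1.isClosed
    have hCs : ∀ k, C (k + 1) ⊆ C k := by
      intro k
      calc C (k + 1) ⊆ E k (M (k + 1)) := hnest k _
        _ = E k (M k) := by rw [← hEper k (M (k + 1)), hMc k]
    obtain ⟨x, hx⟩ := IsCompact.nonempty_iInter_of_sequence_nonempty_isCompact_isClosed
      C hCs hCne ((hCcl 0).isCompact) hCcl
    refine ⟨x, ?_⟩
    have hmx : ∀ k, m x k = M k := fun k =>
      hEuniq k x _ (hmlt x k) _ (hMlt k) (hmm x k) (mem_iInter.mp hx k)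
    funext i
    apply Fin.ext
    rw [hdig x i, hmx i]
    exact (digit_eq hα y i).symm
  -- continuity
  have hmcont : ∀ k, Continuous fun x => m x k := by
    intro k
    rw [continuous_discrete_rng]
    intro j
    by_cases hj : j < n k
    · have hpre : (fun x => m x k) ⁻¹' {j} = E k j := by
        ext x
        simp only [mem_preimage, mem_singleton_iff]
        constructor
        · rintro rfl; exact hmm x k
        · intro hx; exact hEuniq k x _ (hmlt x k) _ hj (hmm x k) hx
      rw [hpre]
      exact (hclopen k _ (hEP k j)).1.isOpen
    · have hpre : (fun x => m x k) ⁻¹' {j} = ∅ := by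
        ext x
        simp only [mem_preimage, mem_singleton_iff, mem_empty_iff_false, iff_false]
        intro h; exact hj (h ▸ hmlt x k)
      rw [hpre]
      exact isOpen_empty
  have hcont : Continuous h₀ := by
    apply continuous_pi
    intro i
    have heq : (fun x => h₀ x i) =
        (fun j : ℕ => (⟨j / Nprod α i % α i, Nat.mod_lt _ (hαpos i)⟩ : Fin (α i))) ∘
        (fun x => m x i) := rfl
    rw [heq]
    exact continuous_of_discreteTopology.comp (hmcont i)
  let eqv : X ≃ (∀ i, Fin (α i)) := Equiv.ofBijective h₀ ⟨hinj, hsurj⟩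
  have hceqv : Continuous eqv := hcont
  exact ⟨hceqv.homeoOfEquivCompactToT2, fun x => hconj x⟩
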